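/- arXiv:1007.2140 — 6 statements merged into one kernel-verified Lean document; each statement's English description precedes it below -/
import Mathlib

section
/- Let f be a symmetric and crossing submodular function on a finite set V, and let I be a hereditary family of subsets of V. If X and Y are two distinct minimal optimal solutions of the hereditary minimization problem (nonempty sets in I minimizing f among nonempty sets of I, with no proper nonempty subset in I achieving the same minimum), then X and Y are disjoint. -/
/-- Minimal optimal solutions of the hereditary minimization problem are disjoint. -/
theorem minimal_optimal_solutions_disjoint
    {α : Type*} [Fintype α] [DecidableEq α] (f : Finset α → ℝ)
    (I : Finset α → Prop)
    (hsym : ∀ A : Finset α, f A = f Aᶜ)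
    (hcross : ∀ A B : Finset α,
      (A \ B).Nonempty → (B \ A).Nonempty → (A ∩ B).Nonempty → ((A ∪ B)ᶜ).Nonempty →
      f (A ∪ B) + f (A ∩ B) ≤ f A + f B)
    (hhered : ∀ A B : Finset α, I B → A ⊆ B → I A)
    (X Y : Finset α)
    (hX : X.Nonempty ∧ I X ∧ (∀ A : Finset α, A.Nonempty → I A → f X ≤ f A) ∧
      (∀ Z : Finset α, Z.Nonempty → Z ⊂ X → I Z → f Z ≠ f X))
    (hY : Y.Nonempty ∧ I Y ∧ (∀ A : Finset α, A.Nonempty → I A → f Y ≤ f A) ∧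
      (∀ Z : Finset α, Z.Nonempty → Z ⊂ Y → I Z → f Z ≠ f Y))
    (hXY : X ≠ Y) :
    Disjoint X Y := by
  obtain ⟨hXne, hXI, hXmin, hXminimal⟩ := hX
  obtain ⟨hYne, hYI, hYmin, hYminimal⟩ := hY
  by_contra hdis
  obtain ⟨v, hvX, hvY⟩ := Finset.not_disjoint_iff.mp hdis
  have hfXY : f X = f Y := le_antisymm (hXmin Y hYne hYI) (hYmin X hXne hXI)
  by_cases hXsubY : X ⊆ Y
  · exact hYminimal X hXne (ssubset_of_ne_of_subset hXY hXsubY) hXI hfXY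
  by_cases hYsubX : Y ⊆ X
  · exact hXminimal Y hYne (ssubset_of_ne_of_subset (Ne.symm hXY) hYsubX) hYI hfXY.symm
  obtain ⟨a, haX, haY⟩ := Finset.not_subset.mp hXsubY
  obtain ⟨b, hbY, hbX⟩ := Finset.not_subset.mp hYsubX
  have hXdY : (X \ Y).Nonempty := ⟨a, Finset.mem_sdiff.mpr ⟨haX, haY⟩⟩
  have hYdX : (Y \ X).Nonempty := ⟨b, Finset.mem_sdiff.mpr ⟨hbY, hbX⟩⟩
  by_cases hcompl : ((X ∪ Y)ᶜ).Nonempty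
  · -- crossing case: apply submodularity to X and Yᶜ
    have h1 : X \ Yᶜ = X ∩ Y := by ext x; simp
    have h2 : Yᶜ \ X = (X ∪ Y)ᶜ := by ext x; simp; tauto
    have h3 : X ∩ Yᶜ = X \ Y := by ext x; simp [Finset.mem_sdiff]
    have h4 : (X ∪ Yᶜ)ᶜ = Y \ X := by ext x; simp; tauto
    have h5 : X ∪ Yᶜ = (Y \ X)ᶜ := by ext x; simp; tauto
    have hc := hcross X Yᶜ (h1 ▸ ⟨v, Finset.mem_inter.mpr ⟨hvX, hvY⟩⟩)
      (h2 ▸ hcompl) (h3 ▸ hXdY) (h4 ▸ hYdX)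
    rw [h5, h3, ← hsym (Y \ X), ← hsym Y] at hc
    have hxy1 : f X < f (X \ Y) := by
      have hle := hXmin (X \ Y) hXdY (hhered _ _ hXI (Finset.sdiff_subset))
      have hne : f (X \ Y) ≠ f X := by
        refine hXminimal (X \ Y) hXdY ⟨Finset.sdiff_subset, ?_⟩
          (hhered _ _ hXI Finset.sdiff_subset)
        intro hsub
        exact (Finset.mem_sdiff.mp (hsub hvX)).2 hvY
      exact lt_of_le_of_ne hle (Ne.symm hne)
    have hxy2 : f Y < f (Y \ X) := by
      have hle := hYmin (Y \ X) hYdX (hhered _ _ hYI (Finset.sdiff_subset))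
      have hne : f (Y \ X) ≠ f Y := by
        refine hYminimal (Y \ X) hYdX ⟨Finset.sdiff_subset, ?_⟩
          (hhered _ _ hYI Finset.sdiff_subset)
        intro hsub
        exact (Finset.mem_sdiff.mp (hsub hvY)).2 hvX
      exact lt_of_le_of_ne hle (Ne.symm hne)
    linarith
  · -- X ∪ Y = V, so Yᶜ ⊆ X is a proper nonempty subset with f Yᶜ = f Y = f X
    have huniv : ∀ x : α, x ∈ X ∪ Y := by
      intro x
      by_contra hx
      exact hcompl ⟨x, Finset.mem_compl.mpr hx⟩
    have hsub : Yᶜ ⊆ X := by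
      intro x hx
      rcases Finset.mem_union.mp (huniv x) with h | h
      · exact h
      · exact absurd h (Finset.mem_compl.mp hx)
    have hYcne : (Yᶜ).Nonempty := ⟨a, Finset.mem_compl.mpr haY⟩
    have hss : Yᶜ ⊂ X := by
      refine ⟨hsub, fun hsub' => ?_⟩
      exact (Finset.mem_compl.mp (hsub' hvX)) hvY
    exact hXminimal Yᶜ hYcne hss (hhered _ _ hXI hsub)
      ((hsym Y).symm.trans hfXY.symm)
end

section
/- Let (V, f, I) be a hereditary submodular system with f symmetric and crossing submodular, let t ∈ V and t ∈ L ⊆ V with L ≠ V. Define V' = (V \ L) ∪ {t}, f'(X) = f(X) if t ∉ X and f'(X) = f(X ∪ L) if t ∈ X ⊆ V'. Then f' is crossing submodular and symmetric on V'. -/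
/-- Contraction of a set `L` into `t` preserves symmetry and crossing submodularity. -/
theorem contraction_preserves_symmetric_crossing_submodular
    {α : Type*} [Fintype α] [DecidableEq α] (f : Finset α → ℝ)
    (hsym : ∀ A : Finset α, f A = f Aᶜ)
    (hcross : ∀ A B : Finset α,
      (A \ B).Nonempty → (B \ A).Nonempty → (A ∩ B).Nonempty → ((A ∪ B)ᶜ).Nonempty →
      f (A ∪ B) + f (A ∩ B) ≤ f A + f B)
    (t : α) (L : Finset α) (htL : t ∈ L) (hL : L ≠ Finset.univ)
    (V' : Finset α) (hV' : V' = Lᶜ ∪ {t})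
    (f' : Finset α → ℝ)
    (hf' : ∀ X : Finset α, X ⊆ V' → f' X = if t ∈ X then f (X ∪ L) else f X) :
    (∀ X : Finset α, X ⊆ V' → f' X = f' (V' \ X)) ∧
    (∀ A B : Finset α, A ⊆ V' → B ⊆ V' →
      (A \ B).Nonempty → (B \ A).Nonempty → (A ∩ B).Nonempty → (V' \ (A ∪ B)).Nonempty →
      f' (A ∪ B) + f' (A ∩ B) ≤ f' A + f' B) := by
  have hmem : ∀ a : α, a ∈ V' ↔ (a ∉ L ∨ a = t) := by
    intro a; simp [hV', Finset.mem_union, Finset.mem_compl]; exact or_comm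
  have hdisj : ∀ X : Finset α, X ⊆ V' → t ∉ X → ∀ a ∈ X, a ∉ L := by
    intro X hX htX a ha hal
    rcases (hmem a).1 (hX ha) with h | h
    · exact h hal
    · exact htX (h ▸ ha)
  constructor
  · intro X hX
    by_cases htX : t ∈ X
    · have htd : t ∉ V' \ X := by simp [htX]
      rw [hf' X hX, hf' _ (Finset.sdiff_subset), if_pos htX, if_neg htd]
      have hEq : V' \ X = (X ∪ L)ᶜ := by
        ext a
        simp only [hV', Finset.mem_sdiff, Finset.mem_union, Finset.mem_compl,
          Finset.mem_singleton]
        constructor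
        · rintro ⟨h1 | h1, h2⟩
          · tauto
          · exact absurd (h1 ▸ htX) h2
        · tauto
      rw [hEq, ← hsym]
    · have hXL := hdisj X hX htX
      have htd : t ∈ V' \ X := by
        simp only [Finset.mem_sdiff]
        exact ⟨(hmem t).2 (Or.inr rfl), htX⟩
      rw [hf' X hX, hf' _ Finset.sdiff_subset, if_neg htX, if_pos htd]
      have hEq : (V' \ X) ∪ L = Xᶜ := by
        ext a
        simp only [hV', Finset.mem_union, Finset.mem_sdiff, Finset.mem_compl,
          Finset.mem_singleton]
        constructor
        · rintro (⟨h1 | h1, h2⟩ | h1)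
          · exact h2
          · exact h1 ▸ htX
          · exact fun hx => hXL a hx h1
        · intro h
          by_cases hl : a ∈ L
          · exact Or.inr hl
          · exact Or.inl ⟨Or.inl hl, h⟩
      rw [hEq, ← hsym X]
  · -- mixed case lemma: t ∈ A, t ∉ B
    have mixed : ∀ A B : Finset α, A ⊆ V' → B ⊆ V' →
        (A \ B).Nonempty → (B \ A).Nonempty → (A ∩ B).Nonempty → (V' \ (A ∪ B)).Nonempty →
        t ∈ A → t ∉ B →
        f' (A ∪ B) + f' (A ∩ B) ≤ f' A + f' B := by
      intro A B hA hB hAB hBA hI hC htA htB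
      have hBL := hdisj B hB htB
      have hU : A ∪ B ⊆ V' := Finset.union_subset hA hB
      have hInt : A ∩ B ⊆ V' := (Finset.inter_subset_left).trans hA
      have htU : t ∈ A ∪ B := Finset.mem_union_left _ htA
      have htI : t ∉ A ∩ B := fun h => htB (Finset.mem_of_mem_inter_right h)
      rw [hf' _ hU, hf' _ hInt, hf' _ hA, hf' _ hB,
        if_pos htU, if_neg htI, if_pos htA, if_neg htB]
      have hUeq : (A ∪ L) ∪ B = (A ∪ B) ∪ L := by
        ext a; simp only [Finset.mem_union]; tauto
      have hIeq : (A ∪ L) ∩ B = A ∩ B := by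
        ext a
        simp only [Finset.mem_inter, Finset.mem_union]
        constructor
        · rintro ⟨h1 | h1, h2⟩
          · exact ⟨h1, h2⟩
          · exact absurd h1 (hBL a h2)
        · rintro ⟨h1, h2⟩; exact ⟨Or.inl h1, h2⟩
      have n1 : ((A ∪ L) \ B).Nonempty := ⟨t, by simp [htB, htL]⟩
      have n2 : (B \ (A ∪ L)).Nonempty := by
        obtain ⟨a, ha⟩ := hBA
        simp only [Finset.mem_sdiff] at ha
        refine ⟨a, ?_⟩
        simp only [Finset.mem_sdiff, Finset.mem_union]
        exact ⟨ha.1, fun h => h.elim ha.2 (hBL a ha.1)⟩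
      have n3 : ((A ∪ L) ∩ B).Nonempty := by
        obtain ⟨a, ha⟩ := hI
        exact ⟨a, hIeq ▸ ha⟩
      have n4 : (((A ∪ L) ∪ B)ᶜ).Nonempty := by
        obtain ⟨a, ha⟩ := hC
        simp only [Finset.mem_sdiff, Finset.mem_union] at ha
        have hat : a ≠ t := fun h => ha.2 (Or.inl (h ▸ htA))
        have haL : a ∉ L := ((hmem a).1 ha.1).resolve_right hat
        refine ⟨a, ?_⟩
        simp only [Finset.mem_compl, Finset.mem_union]
        tauto
      have key := hcross (A ∪ L) B n1 n2 n3 n4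
      rw [hUeq, hIeq] at key
      linarith
    intro A B hA hB hAB hBA hI hC
    have hU : A ∪ B ⊆ V' := Finset.union_subset hA hB
    have hInt : A ∩ B ⊆ V' := (Finset.inter_subset_left).trans hA
    by_cases htA : t ∈ A <;> by_cases htB : t ∈ B
    · -- t in both
      have htU : t ∈ A ∪ B := Finset.mem_union_left _ htA
      have htI : t ∈ A ∩ B := Finset.mem_inter.2 ⟨htA, htB⟩
      rw [hf' _ hU, hf' _ hInt, hf' _ hA, hf' _ hB,
        if_pos htU, if_pos htI, if_pos htA, if_pos htB]
      have hABL : ∀ a ∈ A \ B, a ∉ L := by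
        intro a ha hal
        simp only [Finset.mem_sdiff] at ha
        have := ((hmem a).1 (hA ha.1)).resolve_left (fun h => h hal)
        exact ha.2 (this ▸ htB)
      have hBAL : ∀ a ∈ B \ A, a ∉ L := by
        intro a ha hal
        simp only [Finset.mem_sdiff] at ha
        have := ((hmem a).1 (hB ha.1)).resolve_left (fun h => h hal)
        exact ha.2 (this ▸ htA)
      have hUeq : (A ∪ L) ∪ (B ∪ L) = (A ∪ B) ∪ L := by
        ext a; simp only [Finset.mem_union]; tauto
      have hIeq : (A ∪ L) ∩ (B ∪ L) = (A ∩ B) ∪ L := by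
        ext a; simp only [Finset.mem_inter, Finset.mem_union]; tauto
      have n1 : ((A ∪ L) \ (B ∪ L)).Nonempty := by
        obtain ⟨a, ha⟩ := hAB
        have haL := hABL a ha
        simp only [Finset.mem_sdiff] at ha
        refine ⟨a, ?_⟩
        simp only [Finset.mem_sdiff, Finset.mem_union]
        tauto
      have n2 : ((B ∪ L) \ (A ∪ L)).Nonempty := by
        obtain ⟨a, ha⟩ := hBA
        have haL := hBAL a ha
        simp only [Finset.mem_sdiff] at ha
        refine ⟨a, ?_⟩
        simp only [Finset.mem_sdiff, Finset.mem_union]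
        tauto
      have n3 : ((A ∪ L) ∩ (B ∪ L)).Nonempty := ⟨t, by simp [htL]⟩
      have n4 : (((A ∪ L) ∪ (B ∪ L))ᶜ).Nonempty := by
        obtain ⟨a, ha⟩ := hC
        simp only [Finset.mem_sdiff, Finset.mem_union] at ha
        have hat : a ≠ t := fun h => ha.2 (Or.inl (h ▸ htA))
        have haL : a ∉ L := ((hmem a).1 ha.1).resolve_right hat
        refine ⟨a, ?_⟩
        simp only [Finset.mem_compl, Finset.mem_union]
        tauto
      have key := hcross (A ∪ L) (B ∪ L) n1 n2 n3 n4
      rw [hUeq, hIeq] at key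
      linarith
    · exact mixed A B hA hB hAB hBA hI hC htA htB
    · have := mixed B A hB hA hBA hAB (by rwa [Finset.inter_comm])
        (by rwa [Finset.union_comm]) htB htA
      rw [Finset.union_comm B A, Finset.inter_comm B A] at this
      linarith
    · -- t in neither
      have htU : t ∉ A ∪ B := by simp [htA, htB]
      have htI : t ∉ A ∩ B := by simp [htA]
      rw [hf' _ hU, hf' _ hInt, hf' _ hA, hf' _ hB,
        if_neg htU, if_neg htI, if_neg htA, if_neg htB]
      exact hcross A B hAB hBA hI ⟨t, by simpa using htU⟩
end

section
/- Let d be a symmetric, monotone and consistent map on pairs of disjoint subsets of a finite set V, and define f(S) = d(S, V \ S) for nonempty proper S ⊂ V. Let I be a hereditary family on V. Then any two minimal minimizers of f over nonempty sets in I are disjoint. -/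
open Finset

private lemma aux_min_min
    {α : Type*} [Fintype α] [DecidableEq α]
    (d : Finset α → Finset α → ℝ)
    (hdsym : ∀ A B : Finset α, Disjoint A B → A.Nonempty → B.Nonempty → d A B = d B A)
    (hcons : ∀ A B W : Finset α, Disjoint A B → Disjoint A W → Disjoint B W →
      A.Nonempty → B.Nonempty → W.Nonempty →
      d A W ≥ d B W → d A (W ∪ B) ≥ d B (W ∪ A))
    (X Y : Finset α)
    (hA : (X \ Y).Nonempty) (hB : (Y \ X).Nonempty) (hC : (X ∩ Y).Nonempty)
    (hyp : d ((Y \ X) ∪ (X ∪ Y)ᶜ) (X ∩ Y) ≥ d (X \ Y) (X ∩ Y))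
    (hgt : d (X \ Y) ((X \ Y)ᶜ) > d X Xᶜ) : False := by
  set A := X \ Y with hAdef
  set B := Y \ X with hBdef
  set C := X ∩ Y with hCdef
  set W := (X ∪ Y)ᶜ with hWdef
  have hBW : B ∪ W = Xᶜ := by
    ext a; simp [hBdef, hWdef]; tauto
  have hCA : C ∪ A = X := by
    ext a; simp [hCdef, hAdef]; tauto
  have hCBW : C ∪ (B ∪ W) = Aᶜ := by
    ext a; simp [hCdef, hBdef, hWdef, hAdef]; tauto
  have dBWA : Disjoint (B ∪ W) A := by
    rw [Finset.disjoint_left]; intro a ha hb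
    simp [hBdef, hWdef, hAdef] at ha hb; tauto
  have dBWC : Disjoint (B ∪ W) C := by
    rw [Finset.disjoint_left]; intro a ha hb
    simp [hBdef, hWdef, hCdef] at ha hb; tauto
  have dAC : Disjoint A C := by
    rw [Finset.disjoint_left]; intro a ha hb
    simp [hAdef, hCdef] at ha hb; tauto
  have hBWne : (B ∪ W).Nonempty := hB.mono subset_union_left
  have key := hcons (B ∪ W) A C dBWA dBWC dAC hBWne hA hC hyp
  rw [hCA, hCBW] at key
  have hXc : Xᶜ.Nonempty := by rw [← hBW]; exact hBWne
  have hXne : X.Nonempty := hC.mono inter_subset_left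
  have hsymX : d (B ∪ W) X = d X Xᶜ := by
    rw [hBW]; exact hdsym Xᶜ X disjoint_compl_left hXc hXne
  rw [hsymX] at key
  linarith

/-- For a symmetric, monotone and consistent map `d`, minimal minimizers of
`f S = d S Sᶜ` over nonempty members of a hereditary family are disjoint. -/
theorem minimal_minimizers_of_consistent_map_disjoint
    {α : Type*} [Fintype α] [DecidableEq α]
    (d : Finset α → Finset α → ℝ)
    (hdsym : ∀ A B : Finset α, Disjoint A B → A.Nonempty → B.Nonempty → d A B = d B A)
    (hmono : ∀ A B W : Finset α, Disjoint A B → Disjoint A W → Disjoint B W →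
      A.Nonempty → B.Nonempty → W.Nonempty → d A B ≤ d A (B ∪ W))
    (hcons : ∀ A B W : Finset α, Disjoint A B → Disjoint A W → Disjoint B W →
      A.Nonempty → B.Nonempty → W.Nonempty →
      d A W ≥ d B W → d A (W ∪ B) ≥ d B (W ∪ A))
    (I : Finset α → Prop)
    (hhered : ∀ A B : Finset α, I B → A ⊆ B → I A)
    (f : Finset α → ℝ)
    (hf : ∀ S : Finset α, S.Nonempty → Sᶜ.Nonempty → f S = d S Sᶜ)
    (X Y : Finset α)
    (hX : X.Nonempty ∧ I X ∧ (∀ A : Finset α, A.Nonempty → I A → f X ≤ f A) ∧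
      (∀ Z : Finset α, Z.Nonempty → Z ⊂ X → I Z → f Z ≠ f X))
    (hY : Y.Nonempty ∧ I Y ∧ (∀ A : Finset α, A.Nonempty → I A → f Y ≤ f A) ∧
      (∀ Z : Finset α, Z.Nonempty → Z ⊂ Y → I Z → f Z ≠ f Y))
    (hXY : X ≠ Y) :
    Disjoint X Y := by
  obtain ⟨hXne, hXI, hXmin, hXstrict⟩ := hX
  obtain ⟨hYne, hYI, hYmin, hYstrict⟩ := hY
  by_contra hnd
  have hCne : (X ∩ Y).Nonempty := by
    rwa [Finset.not_disjoint_iff_nonempty_inter] at hnd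
  have hfXY : f X = f Y := le_antisymm (hXmin Y hYne hYI) (hYmin X hXne hXI)
  -- degenerate cases
  rcases (X \ Y).eq_empty_or_nonempty with hAe | hA
  · have hsub : X ⊆ Y := by rwa [Finset.sdiff_eq_empty_iff_subset] at hAe
    exact hYstrict X hXne (hsub.ssubset_of_ne hXY) hXI hfXY
  rcases (Y \ X).eq_empty_or_nonempty with hBe | hB
  · have hsub : Y ⊆ X := by rwa [Finset.sdiff_eq_empty_iff_subset] at hBe
    exact hXstrict Y hYne (hsub.ssubset_of_ne hXY.symm) hYI hfXY.symm
  set A := X \ Y with hAdef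
  set B := Y \ X with hBdef
  set C := X ∩ Y with hCdef
  set W := (X ∪ Y)ᶜ with hWdef
  -- complements are nonempty
  have hXcsub : B ⊆ Xᶜ := by intro a ha; simp [hBdef] at ha ⊢; tauto
  have hYcsub : A ⊆ Yᶜ := by intro a ha; simp [hAdef] at ha ⊢; tauto
  have hXc : Xᶜ.Nonempty := hB.mono hXcsub
  have hYc : Yᶜ.Nonempty := hA.mono hYcsub
  have hAcsub : C ⊆ Aᶜ := by intro a ha; simp [hAdef, hCdef] at ha ⊢; tauto
  have hBcsub : C ⊆ Bᶜ := by intro a ha; simp [hBdef, hCdef] at ha ⊢; tauto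
  have hAc : Aᶜ.Nonempty := hCne.mono hAcsub
  have hBc : Bᶜ.Nonempty := hCne.mono hBcsub
  -- strict minimality consequences
  have hAgt : d A Aᶜ > d X Xᶜ := by
    have h1 : f X ≤ f A := hXmin A hA (hhered A X hXI sdiff_subset)
    have hss : A ⊂ X := Finset.ssubset_iff_of_subset sdiff_subset |>.2
      (hCne.elim fun c hc => ⟨c, (mem_inter.1 hc).1, by simp [hAdef, (mem_inter.1 hc).2]⟩)
    have h2 : f A ≠ f X := hXstrict A hA hss (hhered A X hXI sdiff_subset)
    have := hf A hA hAc
    have := hf X hXne hXc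
    have : f X < f A := lt_of_le_of_ne h1 (Ne.symm h2)
    linarith [hf A hA hAc, hf X hXne hXc]
  have hBgt : d B Bᶜ > d Y Yᶜ := by
    have h1 : f Y ≤ f B := hYmin B hB (hhered B Y hYI sdiff_subset)
    have hss : B ⊂ Y := Finset.ssubset_iff_of_subset sdiff_subset |>.2
      (hCne.elim fun c hc => ⟨c, (mem_inter.1 hc).2, by simp [hBdef, (mem_inter.1 hc).1]⟩)
    have h2 : f B ≠ f Y := hYstrict B hB hss (hhered B Y hYI sdiff_subset)
    have : f Y < f B := lt_of_le_of_ne h1 (Ne.symm h2)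
    linarith [hf B hB hBc, hf Y hYne hYc]
  -- two applications of the aux lemma
  by_cases hyp1 : d (B ∪ W) C ≥ d A C
  · exact aux_min_min d hdsym hcons X Y hA hB hCne hyp1 hAgt
  by_cases hyp2 : d (A ∪ W) C ≥ d B C
  · have hC' : (Y ∩ X).Nonempty := by rwa [inter_comm]
    have hyp2' : d ((X \ Y) ∪ (Y ∪ X)ᶜ) (Y ∩ X) ≥ d (Y \ X) (Y ∩ X) := by
      rwa [inter_comm, union_comm Y X]
    exact aux_min_min d hdsym hcons Y X hB hA hC' hyp2' hBgt
  push_neg at hyp1 hyp2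
  -- monotonicity chains
  have dCB : Disjoint C B := by
    rw [Finset.disjoint_left]; intro a ha hb; simp [hBdef, hCdef] at ha hb; tauto
  have dCA : Disjoint C A := by
    rw [Finset.disjoint_left]; intro a ha hb; simp [hAdef, hCdef] at ha hb; tauto
  have dCW : Disjoint C W := by
    rw [Finset.disjoint_left]; intro a ha hb; simp [hWdef, hCdef] at ha hb; tauto
  have dBW : Disjoint B W := by
    rw [Finset.disjoint_left]; intro a ha hb; simp [hWdef, hBdef] at ha hb; tauto
  have dAW : Disjoint A W := by
    rw [Finset.disjoint_left]; intro a ha hb; simp [hWdef, hAdef] at ha hb; tauto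
  have hBWC : d (B ∪ W) C ≥ d B C := by
    rcases W.eq_empty_or_nonempty with hWe | hWne
    · rw [hWe, union_empty]
    · have h1 : d C B ≤ d C (B ∪ W) := hmono C B W dCB dCW dBW hCne hB hWne
      have h2 : d C B = d B C := hdsym C B dCB hCne hB
      have h3 : d C (B ∪ W) = d (B ∪ W) C := hdsym C (B ∪ W)
        (Finset.disjoint_union_right.2 ⟨dCB, dCW⟩) hCne (hB.mono subset_union_left)
      linarith
  have hAWC : d (A ∪ W) C ≥ d A C := by
    rcases W.eq_empty_or_nonempty with hWe | hWne
    · rw [hWe, union_empty]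
    · have h1 : d C A ≤ d C (A ∪ W) := hmono C A W dCA dCW dAW hCne hA hWne
      have h2 : d C A = d A C := hdsym C A dCA hCne hA
      have h3 : d C (A ∪ W) = d (A ∪ W) C := hdsym C (A ∪ W)
        (Finset.disjoint_union_right.2 ⟨dCA, dCW⟩) hCne (hA.mono subset_union_left)
      linarith
  linarith
end

section
/- Let f be a symmetric crossing submodular function on V. Then the function d defined on pairs of disjoint nonempty subsets by d(A,B) = (1/2)(f(A) + f(B) − f(A ∪ B)) is symmetric and, whenever A, B, W are pairwise disjoint nonempty subsets with A ∪ B ∪ W ≠ V, monotone: d(A,B) ≤ d(A, B ∪ W). -/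
/-- From a symmetric crossing submodular function `f`, the map
`d A B = (f A + f B - f (A ∪ B)) / 2` is symmetric and monotone. -/
theorem induced_map_symmetric_monotone
    {α : Type*} [Fintype α] [DecidableEq α] (f : Finset α → ℝ)
    (hsym : ∀ A : Finset α, f A = f Aᶜ)
    (hcross : ∀ A B : Finset α,
      (A \ B).Nonempty → (B \ A).Nonempty → (A ∩ B).Nonempty → ((A ∪ B)ᶜ).Nonempty →
      f (A ∪ B) + f (A ∩ B) ≤ f A + f B)
    (d : Finset α → Finset α → ℝ)
    (hd : ∀ A B : Finset α, d A B = (f A + f B - f (A ∪ B)) / 2) :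
    (∀ A B : Finset α, Disjoint A B → A.Nonempty → B.Nonempty → d A B = d B A) ∧
    (∀ A B W : Finset α, Disjoint A B → Disjoint A W → Disjoint B W →
      A.Nonempty → B.Nonempty → W.Nonempty → A ∪ B ∪ W ≠ Finset.univ →
      d A B ≤ d A (B ∪ W)) := by
  constructor
  · intro A B _ _ _
    rw [hd, hd, Finset.union_comm]
    ring
  · intro A B W hAB hAW hBW hA hB hW hne
    have h1 : ((A ∪ B) \ (B ∪ W)).Nonempty := by
      obtain ⟨a, ha⟩ := hA
      exact ⟨a, by
        simp only [Finset.mem_sdiff, Finset.mem_union]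
        exact ⟨Or.inl ha, by
          rintro (h | h)
          · exact (Finset.disjoint_left.mp hAB ha) h
          · exact (Finset.disjoint_left.mp hAW ha) h⟩⟩
    have h2 : ((B ∪ W) \ (A ∪ B)).Nonempty := by
      obtain ⟨w, hw⟩ := hW
      exact ⟨w, by
        simp only [Finset.mem_sdiff, Finset.mem_union]
        exact ⟨Or.inr hw, by
          rintro (h | h)
          · exact (Finset.disjoint_right.mp hAW hw) h
          · exact (Finset.disjoint_right.mp hBW hw) h⟩⟩
    have h3 : ((A ∪ B) ∩ (B ∪ W)).Nonempty := by
      obtain ⟨b, hb⟩ := hB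
      exact ⟨b, by simp [hb]⟩
    have hun : (A ∪ B) ∪ (B ∪ W) = A ∪ B ∪ W := by
      ext x; simp only [Finset.mem_union]; tauto
    have h4 : (((A ∪ B) ∪ (B ∪ W))ᶜ).Nonempty := by
      rw [hun]
      rcases Finset.eq_empty_or_nonempty ((A ∪ B ∪ W)ᶜ) with h | h
      · exact absurd (by rw [← Finset.compl_eq_empty_iff]; exact h) hne
      · exact h
    have hint : (A ∪ B) ∩ (B ∪ W) = B := by
      ext x
      simp only [Finset.mem_inter, Finset.mem_union]
      constructor
      · rintro ⟨h | h, h' | h'⟩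
        · exact absurd h' (Finset.disjoint_left.mp hAB h)
        · exact absurd h' (Finset.disjoint_left.mp hAW h)
        · exact h
        · exact h
      · exact fun h => ⟨Or.inr h, Or.inl h⟩
    have key := hcross (A ∪ B) (B ∪ W) h1 h2 h3 h4
    rw [hun, hint] at key
    rw [hd, hd, Finset.union_assoc] at *
    linarith
end

section
/- Let f be an intersecting submodular and intersecting posimodular function on V, let s ∉ V, and define the antirestriction g on V ∪ {s} by g(X) = f(X) if s ∉ X and g(X) = f(V \ (X \ {s})) if s ∈ X. Then g is crossing submodular on V ∪ {s}. -/
private lemma antirestriction_mixed_aux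
    {α : Type*} [Fintype α] [DecidableEq α]
    (V : Finset α) (s : α) (hs : s ∉ V)
    (f : Finset α → ℝ)
    (hposi : ∀ A B : Finset α, A ⊆ V → B ⊆ V →
      (A \ B).Nonempty → (B \ A).Nonempty → (A ∩ B).Nonempty →
      f (A \ B) + f (B \ A) ≤ f A + f B)
    (g : Finset α → ℝ)
    (hg : ∀ X : Finset α, X ⊆ V ∪ {s} →
      g X = if s ∈ X then f (V \ (X \ {s})) else f X)
    (A B : Finset α) (hA : A ⊆ V ∪ {s}) (hB : B ⊆ V ∪ {s})
    (hsA : s ∈ A) (hsB : s ∉ B)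
    (h2 : (B \ A).Nonempty) (h3 : (A ∩ B).Nonempty)
    (h4 : ((V ∪ {s}) \ (A ∪ B)).Nonempty) :
    g (A ∪ B) + g (A ∩ B) ≤ g A + g B := by
  have hxV : ∀ x, x ∈ V → x ≠ s := fun x h he => hs (he ▸ h)
  have hxA : ∀ x, x ∈ A → x ∈ V ∨ x = s := fun x h => by
    exact (by simpa using hA h : x = s ∨ x ∈ V).symm
  have hxB : ∀ x, x ∈ B → x ∈ V ∨ x = s := fun x h => by
    exact (by simpa using hB h : x = s ∨ x ∈ V).symm
  have hxsA : ∀ x : α, x = s → x ∈ A := fun x h => h ▸ hsA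
  have hxsB : ∀ x, x ∈ B → x ≠ s := fun x h he => hsB (he ▸ h)
  set A' : Finset α := V \ (A \ {s}) with hA'
  have hA'V : A' ⊆ V := Finset.sdiff_subset
  have hBV : B ⊆ V := fun x h => by
    rcases hxB x h with h' | h'
    · exact h'
    · exact absurd h' (hxsB x h)
  -- key identities
  have id1 : V \ ((A ∪ B) \ {s}) = A' \ B := by
    ext x
    simp only [hA', Finset.mem_sdiff, Finset.mem_union, Finset.mem_singleton]
    have := hxV x
    tauto
  have id2 : B \ A' = A ∩ B := by
    ext x
    simp only [hA', Finset.mem_sdiff, Finset.mem_inter, Finset.mem_singleton]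
    have h1 := hxV x
    have h2 := hxB x
    have h3 := hxsB x
    tauto
  have id3 : A' ∩ B = B \ A := by
    ext x
    simp only [hA', Finset.mem_sdiff, Finset.mem_inter, Finset.mem_singleton]
    have h1 := hxV x
    have h2 := hxB x
    have h3 := hxsB x
    have h4 := hxsA x
    tauto
  have id4 : (V ∪ {s}) \ (A ∪ B) = A' \ B := by
    ext x
    simp only [hA', Finset.mem_sdiff, Finset.mem_union, Finset.mem_singleton]
    have h1 := hxV x
    have h4 := hxsA x
    tauto
  -- rewrite g values
  have gA : g A = f A' := by rw [hg A hA, if_pos hsA]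
  have gB : g B = f B := by rw [hg B hB, if_neg hsB]
  have gAB : g (A ∪ B) = f (A' \ B) := by
    rw [hg (A ∪ B) (Finset.union_subset hA hB),
      if_pos (Finset.mem_union.mpr (Or.inl hsA)), id1]
  have gAI : g (A ∩ B) = f (A ∩ B) := by
    rw [hg (A ∩ B) ((Finset.inter_subset_left).trans hA),
      if_neg (fun h => hsB (Finset.mem_inter.mp h).2)]
  have key := hposi A' B hA'V hBV (id4 ▸ h4) (id2 ▸ h3) (id3 ▸ h2)
  rw [id2] at key
  rw [gA, gB, gAB, gAI]
  linarith

/-- The antirestriction `g` of an intersecting submodular and intersecting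
posimodular function `f` is crossing submodular on `V ∪ {s}`. -/
theorem antirestriction_crossing_submodular
    {α : Type*} [Fintype α] [DecidableEq α]
    (V : Finset α) (s : α) (hs : s ∉ V)
    (f : Finset α → ℝ)
    (hsub : ∀ A B : Finset α, A ⊆ V → B ⊆ V →
      (A \ B).Nonempty → (B \ A).Nonempty → (A ∩ B).Nonempty →
      f (A ∪ B) + f (A ∩ B) ≤ f A + f B)
    (hposi : ∀ A B : Finset α, A ⊆ V → B ⊆ V →
      (A \ B).Nonempty → (B \ A).Nonempty → (A ∩ B).Nonempty →
      f (A \ B) + f (B \ A) ≤ f A + f B)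
    (g : Finset α → ℝ)
    (hg : ∀ X : Finset α, X ⊆ V ∪ {s} →
      g X = if s ∈ X then f (V \ (X \ {s})) else f X) :
    ∀ A B : Finset α, A ⊆ V ∪ {s} → B ⊆ V ∪ {s} →
      (A \ B).Nonempty → (B \ A).Nonempty → (A ∩ B).Nonempty →
      ((V ∪ {s}) \ (A ∪ B)).Nonempty →
      g (A ∪ B) + g (A ∩ B) ≤ g A + g B := by
  intro A B hA hB h1 h2 h3 h4
  have hxV : ∀ x, x ∈ V → x ≠ s := fun x h he => hs (he ▸ h)
  have hxA : ∀ x, x ∈ A → x ∈ V ∨ x = s := fun x h => by exact (by simpa using hA h : x = s ∨ x ∈ V).symm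
  have hxB : ∀ x, x ∈ B → x ∈ V ∨ x = s := fun x h => by exact (by simpa using hB h : x = s ∨ x ∈ V).symm
  by_cases hsA : s ∈ A <;> by_cases hsB : s ∈ B
  · -- s ∈ A, s ∈ B : use submodularity on complements
    have hxsA : ∀ x : α, x = s → x ∈ A := fun x h => h ▸ hsA
    have hxsB : ∀ x : α, x = s → x ∈ B := fun x h => h ▸ hsB
    set A' : Finset α := V \ (A \ {s}) with hA'
    set B' : Finset α := V \ (B \ {s}) with hB'
    have hA'V : A' ⊆ V := Finset.sdiff_subset
    have hB'V : B' ⊆ V := Finset.sdiff_subset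
    have id1 : V \ ((A ∪ B) \ {s}) = A' ∩ B' := by
      ext x
      simp only [hA', hB', Finset.mem_sdiff, Finset.mem_union, Finset.mem_inter,
        Finset.mem_singleton]
      tauto
    have id2 : V \ ((A ∩ B) \ {s}) = A' ∪ B' := by
      ext x
      simp only [hA', hB', Finset.mem_sdiff, Finset.mem_union, Finset.mem_inter,
        Finset.mem_singleton]
      tauto
    have id3 : A' \ B' = B \ A := by
      ext x
      simp only [hA', hB', Finset.mem_sdiff, Finset.mem_singleton]
      have e1 := hxV x
      have e2 := hxB x
      have e3 := hxsA x
      tauto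
    have id4 : B' \ A' = A \ B := by
      ext x
      simp only [hA', hB', Finset.mem_sdiff, Finset.mem_singleton]
      have e1 := hxV x
      have e2 := hxA x
      have e3 := hxsB x
      tauto
    have id5 : (V ∪ {s}) \ (A ∪ B) = A' ∩ B' := by
      ext x
      simp only [hA', hB', Finset.mem_sdiff, Finset.mem_union, Finset.mem_inter,
        Finset.mem_singleton]
      have e1 := hxV x
      have e3 := hxsA x
      tauto
    have gA : g A = f A' := by rw [hg A hA, if_pos hsA]
    have gB : g B = f B' := by rw [hg B hB, if_pos hsB]
    have gAB : g (A ∪ B) = f (A' ∩ B') := by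
      rw [hg (A ∪ B) (Finset.union_subset hA hB),
        if_pos (Finset.mem_union.mpr (Or.inl hsA)), id1]
    have gAI : g (A ∩ B) = f (A' ∪ B') := by
      rw [hg (A ∩ B) ((Finset.inter_subset_left).trans hA),
        if_pos (Finset.mem_inter.mpr ⟨hsA, hsB⟩), id2]
    have key := hsub A' B' hA'V hB'V (id3 ▸ h2) (id4 ▸ h1) (id5 ▸ h4)
    rw [gA, gB, gAB, gAI]
    linarith
  · -- s ∈ A, s ∉ B
    exact antirestriction_mixed_aux V s hs f hposi g hg A B hA hB hsA hsB h2 h3 h4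
  · -- s ∉ A, s ∈ B
    have := antirestriction_mixed_aux V s hs f hposi g hg B A hB hA hsB hsA h1
      (by rwa [Finset.inter_comm]) (by rw [Finset.union_comm B A]; exact h4)
    rw [Finset.union_comm, Finset.inter_comm]
    linarith
  · -- s ∉ A, s ∉ B : direct submodularity
    have hAV : A ⊆ V := fun x h => by
      rcases hxA x h with h' | h'
      · exact h'
      · exact absurd (h' ▸ h) hsA
    have hBV : B ⊆ V := fun x h => by
      rcases hxB x h with h' | h'
      · exact h'
      · exact absurd (h' ▸ h) hsB
    have gA : g A = f A := by rw [hg A hA, if_neg hsA]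
    have gB : g B = f B := by rw [hg B hB, if_neg hsB]
    have gAB : g (A ∪ B) = f (A ∪ B) := by
      rw [hg (A ∪ B) (Finset.union_subset hA hB),
        if_neg (fun h => (Finset.mem_union.mp h).elim hsA hsB)]
    have gAI : g (A ∩ B) = f (A ∩ B) := by
      rw [hg (A ∩ B) ((Finset.inter_subset_left).trans hA),
        if_neg (fun h => hsA (Finset.mem_inter.mp h).1)]
    rw [gA, gB, gAB, gAI]
    exact hsub A B hAV hBV h1 h2 h3
end

section
/- Let f be a symmetric crossing submodular function on V with |V| ≥ 2 and let I be a nontrivial hereditary family (V ∉ I) containing at least one nonempty set. Then the number of minimal optimal solutions of the hereditary minimization problem is at most |V|. -/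
/-- The number of minimal optimal solutions of the hereditary minimization
problem is at most `|V|`. -/
theorem card_minimal_optimal_solutions_le
    {α : Type*} [Fintype α] [DecidableEq α] (f : Finset α → ℝ)
    (hcard : 2 ≤ Fintype.card α)
    (hsym : ∀ A : Finset α, f A = f Aᶜ)
    (hcross : ∀ A B : Finset α,
      (A \ B).Nonempty → (B \ A).Nonempty → (A ∩ B).Nonempty → ((A ∪ B)ᶜ).Nonempty →
      f (A ∪ B) + f (A ∩ B) ≤ f A + f B)
    (I : Finset α → Prop)
    (hhered : ∀ A B : Finset α, I B → A ⊆ B → I A)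
    (hnontriv : ¬ I Finset.univ)
    (hne : ∃ A : Finset α, A.Nonempty ∧ I A) :
    {X : Finset α | X.Nonempty ∧ I X ∧
      (∀ A : Finset α, A.Nonempty → I A → f X ≤ f A) ∧
      (∀ Z : Finset α, Z.Nonempty → Z ⊂ X → I Z → f Z ≠ f X)}.ncard ≤
      Fintype.card α := by
  classical
  set S : Set (Finset α) := {X : Finset α | X.Nonempty ∧ I X ∧
      (∀ A : Finset α, A.Nonempty → I A → f X ≤ f A) ∧
      (∀ Z : Finset α, Z.Nonempty → Z ⊂ X → I Z → f Z ≠ f X)} with hSdef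
  -- minimal optimal solutions are pairwise disjoint
  have hdisj : ∀ X ∈ S, ∀ Y ∈ S, X ≠ Y → Disjoint X Y := by
    intro X hX Y hY hXY
    by_contra hnd
    have hint : (X ∩ Y).Nonempty := Finset.not_disjoint_iff_nonempty_inter.mp hnd
    obtain ⟨hXne, hXI, hXopt, hXmin⟩ := hX
    obtain ⟨hYne, hYI, hYopt, hYmin⟩ := hY
    have hfXY : f X = f Y := le_antisymm (hXopt Y hYne hYI) (hYopt X hXne hXI)
    -- neither contains the other
    by_cases hsub : X ⊆ Y
    · exact hYmin X hXne (HasSubset.Subset.ssubset_of_ne hsub hXY) hXI hfXY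
    by_cases hsub' : Y ⊆ X
    · exact hXmin Y hYne (HasSubset.Subset.ssubset_of_ne hsub' (Ne.symm hXY)) hYI hfXY.symm
    have hXdY : (X \ Y).Nonempty := Finset.sdiff_nonempty.mpr hsub
    have hYdX : (Y \ X).Nonempty := Finset.sdiff_nonempty.mpr hsub'
    by_cases hcov : ((X ∪ Y)ᶜ).Nonempty
    · -- crossing submodularity applied to X and Yᶜ
      have e1 : X \ Yᶜ = X ∩ Y := by ext a; simp
      have e2 : Yᶜ \ X = (X ∪ Y)ᶜ := by ext a; simp; tauto
      have e3 : X ∩ Yᶜ = X \ Y := by ext a; simp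
      have e4 : (X ∪ Yᶜ)ᶜ = Y \ X := by ext a; simp; tauto
      have h := hcross X Yᶜ (by rw [e1]; exact hint) (by rw [e2]; exact hcov)
        (by rw [e3]; exact hXdY) (by rw [e4]; exact hYdX)
      rw [e3, hsym (X ∪ Yᶜ), e4, ← hsym Y] at h
      -- h : f (Y \ X) + f (X \ Y) ≤ f X + f Y
      have hIXY : I (X \ Y) := hhered _ X hXI (Finset.sdiff_subset)
      have hIYX : I (Y \ X) := hhered _ Y hYI (Finset.sdiff_subset)
      have h1 : f X ≤ f (X \ Y) := hXopt _ hXdY hIXY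
      have h2 : f Y ≤ f (Y \ X) := hYopt _ hYdX hIYX
      have heq : f (X \ Y) = f X := by linarith
      obtain ⟨a, ha⟩ := hint
      have hss : X \ Y ⊂ X := by
        refine Finset.ssubset_iff_of_subset Finset.sdiff_subset |>.mpr ?_
        exact ⟨a, (Finset.mem_inter.mp ha).1, fun h => (Finset.mem_sdiff.mp h).2
          (Finset.mem_inter.mp ha).2⟩
      exact hXmin (X \ Y) hXdY hss hIXY heq
    · -- X ∪ Y = univ; then Xᶜ ⊆ Y and is a smaller optimal solution
      have huniv : X ∪ Y = Finset.univ := by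
        rw [Finset.not_nonempty_iff_eq_empty] at hcov
        simpa using congrArg (·ᶜ) hcov
      have hsubc : Xᶜ ⊆ Y := by
        intro a ha
        have : a ∈ X ∪ Y := huniv ▸ Finset.mem_univ a
        rcases Finset.mem_union.mp this with h | h
        · exact absurd h (Finset.mem_compl.mp ha)
        · exact h
      have hXcI : I Xᶜ := hhered _ Y hYI hsubc
      have hXcne : Xᶜ.Nonempty := by
        rw [Finset.nonempty_iff_ne_empty]
        intro h
        have : X = Finset.univ := by simpa using congrArg (·ᶜ) h
        exact hnontriv (this ▸ hXI)
      have hne' : Xᶜ ≠ Y := by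
        intro h
        obtain ⟨a, ha⟩ := hint
        have := Finset.mem_inter.mp ha
        exact (Finset.mem_compl.mp (h ▸ this.2)) this.1
      have heq : f Xᶜ = f Y := by
        have := hsym X
        linarith [hYopt Xᶜ hXcne hXcI]
      exact hYmin Xᶜ hXcne (HasSubset.Subset.ssubset_of_ne hsubc hne') hXcI heq
  -- pairwise disjoint nonempty sets: inject into α via a chosen element
  have hSne : ∀ X : S, (X : Finset α).Nonempty := fun X => X.2.1
  let g : S → α := fun X => (hSne X).choose
  have hg : Function.Injective g := by
    rintro X Y h
    have hx : g X ∈ (X : Finset α) := (hSne X).choose_spec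
    have hy : g Y ∈ (Y : Finset α) := (hSne Y).choose_spec
    by_contra hne'
    have hvne : (X : Finset α) ≠ (Y : Finset α) := fun hv =>
      hne' (Subtype.ext hv)
    have := hdisj X X.2 Y Y.2 hvne
    exact Finset.disjoint_left.mp this hx (h ▸ hy)
  calc S.ncard = Nat.card S := (Nat.card_coe_set_eq S).symm
    _ ≤ Nat.card α := Nat.card_le_card_of_injective g hg
    _ = Fintype.card α := Nat.card_eq_fintype_card
end
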